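/- Let Y ⊂ ℝ be measurable with finite measure whose complement contains a closed interval ρ·[−1,1] + τ (ρ > 0, τ ∈ ℝ), and let I'(ρ,τ) = ρ·((−1,1) \ [−1/2,1/2]) + τ. Then there exists a point q ∈ ρ·(−1/2,1/2) + τ such that P(Y ∪ I'(ρ,τ), q) = 0, where P(X,z) = (i/π)∫_X dt/(z−t) extended continuously to real points outside the closure of X. -/

import Mathlib

open Set MeasureTheory Complex

/-- The Poisson-type integral `P(X,z) = (i/π) ∫_X dt/(z-t)`; at a real point outside the
closure of `X` the integral converges and agrees with the continuous extension. -/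
noncomputable def P (X : Set ℝ) (z : ℂ) : ℂ :=
  (Complex.I / (Real.pi : ℂ)) * ∫ t in X, (z - (t : ℂ))⁻¹

lemma aux_Ioo_diff_Icc {a b c d : ℝ} (hac : a ≤ c) (hcd : c ≤ d) (hdb : d ≤ b) :
    Set.Ioo a b \ Set.Icc c d = Set.Ioo a c ∪ Set.Ioo d b := by
  ext x
  simp only [Set.mem_diff, Set.mem_Ioo, Set.mem_Icc, Set.mem_union, not_and, not_le]
  constructor
  · rintro ⟨⟨h1, h2⟩, h3⟩
    rcases lt_or_ge x c with h | h
    · exact Or.inl ⟨h1, h⟩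
    · exact Or.inr ⟨h3 h, h2⟩
  · rintro (⟨h1, h2⟩ | ⟨h1, h2⟩)
    · exact ⟨⟨h1, by linarith⟩, fun hc => by linarith⟩
    · exact ⟨⟨by linarith, h2⟩, fun hc => by linarith⟩

lemma aux_integrableOn_Ioo {s t q : ℝ} (hq : q ∉ Set.Icc s t) :
    IntegrableOn (fun x => (q - x)⁻¹) (Set.Ioo s t) := by
  apply IntegrableOn.mono_set ?_ Set.Ioo_subset_Icc_self
  apply ContinuousOn.integrableOn_Icc
  apply ContinuousOn.inv₀ ((continuous_const.sub continuous_id).continuousOn)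
  intro x hx hx0
  simp only [Pi.sub_apply, id, sub_eq_zero] at hx0
  exact hq (hx0 ▸ hx)

lemma aux_integral_Ioo {s t q : ℝ} (hst : s ≤ t) (hq : q ∉ Set.Icc s t) :
    ∫ x in Set.Ioo s t, (q - x)⁻¹ = Real.log ((q - s) / (q - t)) := by
  have hq' : q < s ∨ t < q := by
    by_contra h
    push_neg at h
    exact hq ⟨h.1, h.2⟩
  rw [← MeasureTheory.integral_Ioc_eq_integral_Ioo, ← intervalIntegral.integral_of_le hst]
  rw [intervalIntegral.integral_comp_sub_left (fun x : ℝ => x⁻¹) q]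
  rw [integral_inv]
  intro hmem
  rw [Set.uIcc_of_le (by linarith)] at hmem
  obtain ⟨h1, h2⟩ := hmem
  rcases hq' with h | h <;> linarith

set_option maxHeartbeats 1000000 in
theorem P_zero_in_gap (Y : Set ℝ) (hY : MeasurableSet Y) (hYfin : volume Y < ⊤)
    (ρ τ : ℝ) (hρ : 0 < ρ) (hdisj : Set.Icc (τ - ρ) (τ + ρ) ⊆ Yᶜ) :
    ∃ q ∈ Set.Ioo (τ - ρ / 2) (τ + ρ / 2),
      P (Y ∪ (fun x : ℝ => ρ * x + τ) '' (Set.Ioo (-1 : ℝ) 1 \ Set.Icc (-(1/2)) (1/2)))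
        (q : ℂ) = 0 := by
  set a := τ - ρ with ha
  set b := τ + ρ with hb
  set c := τ - ρ / 2 with hc
  set d := τ + ρ / 2 with hd
  -- the image set
  have hinj : Function.Injective (fun x : ℝ => ρ * x + τ) :=
    Function.Injective.comp (add_left_injective τ) (mul_right_injective₀ hρ.ne')
  have himg : (fun x : ℝ => ρ * x + τ) '' (Set.Ioo (-1 : ℝ) 1 \ Set.Icc (-(1/2)) (1/2))
      = Set.Ioo a c ∪ Set.Ioo d b := by
    rw [Set.image_diff hinj, Set.image_affine_Ioo hρ, Set.image_affine_Icc' hρ]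
    rw [show ρ * (-1) + τ = a by rw [ha]; ring, show ρ * 1 + τ = b by rw [hb]; ring,
      show ρ * (-(1/2)) + τ = c by rw [hc]; ring, show ρ * (1/2) + τ = d by rw [hd]; ring]
    exact aux_Ioo_diff_Icc (by rw [ha, hc]; linarith) (by rw [hc, hd]; linarith)
      (by rw [hd, hb]; linarith)
  -- Y avoids [a,b]
  have hYd : ∀ t ∈ Y, t ∉ Set.Icc a b := fun t ht hmem => hdisj hmem ht
  -- distance bound for q in the gap
  have hdist : ∀ q ∈ Set.Ioo c d, ∀ t ∈ Y, ρ / 2 ≤ |q - t| := by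
    intro q hq t ht
    have ht' := hYd t ht
    simp only [Set.mem_Icc, not_and, not_le] at ht'
    obtain ⟨hq1, hq2⟩ := hq
    rcases le_or_gt a t with h | h
    · have : b < t := ht' h
      refine le_abs.mpr (Or.inr ?_)
      rw [hb] at this; rw [hd] at hq2; linarith
    · refine le_abs.mpr (Or.inl ?_)
      rw [ha] at h; rw [hc] at hq1; linarith
  have hnormb : ∀ q ∈ Set.Ioo c d, ∀ t ∈ Y, ‖(q - t)⁻¹‖ ≤ 2 / ρ := by
    intro q hq t ht
    rw [norm_inv, Real.norm_eq_abs, show (2:ℝ)/ρ = (ρ/2)⁻¹ by rw [inv_div]]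
    exact inv_anti₀ (by positivity) (hdist q hq t ht)
  have hmeas : ∀ q : ℝ, AEStronglyMeasurable (fun t : ℝ => (q - t)⁻¹) (volume.restrict Y) :=
    fun q => ((measurable_const.sub measurable_id).inv).aestronglyMeasurable
  have hconst : IntegrableOn (fun _ : ℝ => 2 / ρ) Y := by
    exact integrableOn_const hYfin.ne
  have hFint : ∀ q ∈ Set.Ioo c d, IntegrableOn (fun t : ℝ => (q - t)⁻¹) Y := by
    intro q hq
    refine Integrable.mono' hconst (hmeas q) ?_
    exact (ae_restrict_iff' hY).2 (ae_of_all _ fun t ht => hnormb q hq t ht)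
  set F : ℝ → ℝ := fun q => ∫ t in Y, (q - t)⁻¹ with hF
  set M : ℝ := 2 / ρ * (volume Y).toReal with hM
  have hM0 : 0 ≤ M := by positivity
  have hFbound : ∀ q ∈ Set.Ioo c d, |F q| ≤ M := by
    intro q hq
    rw [← Real.norm_eq_abs]
    exact norm_setIntegral_le_of_norm_le_const hYfin (fun t ht => hnormb q hq t ht)
  have hFcont : ∀ q ∈ Set.Ioo c d, ContinuousAt F q := by
    intro q hq
    apply continuousAt_of_dominated (bound := fun _ => 2 / ρ)
    · exact Filter.Eventually.of_forall fun x => hmeas x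
    · filter_upwards [isOpen_Ioo.eventually_mem hq] with x hx
      exact (ae_restrict_iff' hY).2 (ae_of_all _ fun t ht => hnormb x hx t ht)
    · exact hconst
    · refine (ae_restrict_iff' hY).2 (ae_of_all _ fun t ht => ?_)
      have hne : q - t ≠ 0 := by
        have := hdist q hq t ht
        intro h0
        rw [h0, abs_zero] at this
        linarith
      exact ((continuous_id.sub continuous_const).continuousAt).inv₀ hne
  -- the combined function
  set G : ℝ → ℝ := fun q =>
    F q + Real.log ((q - a) / (q - c)) + Real.log ((q - d) / (q - b)) with hG
  have hac : a < c := by rw [ha, hc]; linarith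
  have hcd : c < d := by rw [hc, hd]; linarith
  have hdb : d < b := by rw [hd, hb]; linarith
  have hGF : ∀ q ∈ Set.Ioo c d,
      (∫ t in Y ∪ (Set.Ioo a c ∪ Set.Ioo d b), (q - t)⁻¹) = G q := by
    intro q hq
    obtain ⟨hq1, hq2⟩ := hq
    have hqac : q ∉ Set.Icc a c := by simp only [Set.mem_Icc, not_and, not_le]; intro; linarith
    have hqdb : q ∉ Set.Icc d b := by simp only [Set.mem_Icc, not_and, not_le]; intro h; linarith
    have hd1 : Disjoint Y (Set.Ioo a c ∪ Set.Ioo d b) := by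
      rw [Set.disjoint_left]
      intro t ht htu
      apply hYd t ht
      rcases htu with h | h
      · exact ⟨h.1.le, by have := h.2; linarith⟩
      · exact ⟨by have := h.1; linarith, h.2.le⟩
    have hd2 : Disjoint (Set.Ioo a c) (Set.Ioo d b) := by
      rw [Set.disjoint_left]
      intro t ht ht'
      have := ht.2; have := ht'.1; linarith
    rw [MeasureTheory.setIntegral_union hd1 (measurableSet_Ioo.union measurableSet_Ioo)
      (hFint q ⟨hq1, hq2⟩) ((aux_integrableOn_Ioo hqac).union (aux_integrableOn_Ioo hqdb)),
      MeasureTheory.setIntegral_union hd2 measurableSet_Ioo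
      (aux_integrableOn_Ioo hqac) (aux_integrableOn_Ioo hqdb),
      aux_integral_Ioo hac.le hqac, aux_integral_Ioo hdb.le hqdb]
    rw [hG]
    ring
  -- choice of ε and endpoints
  set E : ℝ := M + Real.log 3 + 1 with hE
  have hlog3 : 0 < Real.log 3 := Real.log_pos (by norm_num)
  have hE0 : 0 < E := by rw [hE]; linarith
  set ε : ℝ := ρ / 2 * Real.exp (-E) with hε
  have hε0 : 0 < ε := by positivity
  have hεhalf : ε < ρ / 2 := by
    rw [hε]
    nth_rewrite 2 [show ρ / 2 = ρ / 2 * 1 by ring]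
    exact mul_lt_mul_of_pos_left (Real.exp_lt_one_iff.mpr (by linarith)) (by positivity)
  have hkey : ρ / (2 * ε) = Real.exp E := by
    rw [hε, Real.exp_neg]
    field_simp
  have hlogkey : Real.log (ρ / (2 * ε)) = E := by rw [hkey, Real.log_exp]
  set q₁ : ℝ := c + ε with hq₁
  set q₂ : ℝ := d - ε with hq₂
  have hq₁mem : q₁ ∈ Set.Ioo c d := by
    constructor
    · rw [hq₁]; linarith
    · rw [hq₁, hc, hd]; linarith
  have hq₂mem : q₂ ∈ Set.Ioo c d := by
    constructor
    · rw [hq₂, hc, hd]; linarith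
    · rw [hq₂]; linarith
  have hq₁₂ : q₁ ≤ q₂ := by rw [hq₁, hq₂, hc, hd]; linarith
  -- value at q₁ is positive
  have hG1 : 0 < G q₁ := by
    have e1 : q₁ - a = ρ / 2 + ε := by rw [hq₁, hc, ha]; ring
    have e2 : q₁ - c = ε := by rw [hq₁]; ring
    have e3 : q₁ - d = -(ρ - ε) := by rw [hq₁, hc, hd]; ring
    have e4 : q₁ - b = -(3 * ρ / 2 - ε) := by rw [hq₁, hc, hb]; ring
    have t1 : E ≤ Real.log ((q₁ - a) / (q₁ - c)) := by
      rw [e1, e2, ← hlogkey]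
      apply (Real.log_le_log_iff (by positivity) (by positivity)).mpr
      rw [div_le_div_iff₀ (by positivity) (by positivity)]
      nlinarith
    have t2 : -Real.log 3 ≤ Real.log ((q₁ - d) / (q₁ - b)) := by
      rw [e3, e4, neg_div_neg_eq, ← Real.log_inv, show ((3:ℝ))⁻¹ = 1/3 by norm_num]
      apply (Real.log_le_log_iff (by norm_num) (by apply div_pos <;> linarith)).mpr
      rw [div_le_div_iff₀ (by norm_num) (by linarith)]
      linarith
    have hFq := (abs_le.mp (hFbound q₁ hq₁mem)).1
    rw [hG]
    dsimp only
    rw [hE] at t1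
    linarith
  -- value at q₂ is negative
  have hG2 : G q₂ < 0 := by
    have f1 : q₂ - a = 3 * ρ / 2 - ε := by rw [hq₂, hd, ha]; ring
    have f2 : q₂ - c = ρ - ε := by rw [hq₂, hd, hc]; ring
    have f3 : q₂ - d = -ε := by rw [hq₂]; ring
    have f4 : q₂ - b = -(ρ / 2 + ε) := by rw [hq₂, hd, hb]; ring
    have u1 : Real.log ((q₂ - a) / (q₂ - c)) ≤ Real.log 3 := by
      rw [f1, f2]
      apply (Real.log_le_log_iff (by apply div_pos <;> linarith) (by norm_num)).mpr
      rw [div_le_iff₀ (by linarith)]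
      linarith
    have u2 : Real.log ((q₂ - d) / (q₂ - b)) ≤ -E := by
      rw [f3, f4, neg_div_neg_eq, ← hlogkey, ← Real.log_inv]
      apply (Real.log_le_log_iff (by apply div_pos <;> linarith) (by positivity)).mpr
      rw [inv_div, div_le_div_iff₀ (by linarith) (by positivity)]
      nlinarith
    have hFq := (abs_le.mp (hFbound q₂ hq₂mem)).2
    rw [hG]
    dsimp only
    rw [hE] at u2
    linarith
  -- continuity on [q₁, q₂]
  have hsub : Set.Icc q₁ q₂ ⊆ Set.Ioo c d := fun x hx =>
    ⟨lt_of_lt_of_le hq₁mem.1 hx.1, lt_of_le_of_lt hx.2 hq₂mem.2⟩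
  have hGcont : ContinuousOn G (Set.Icc q₁ q₂) := by
    apply ContinuousOn.add
    apply ContinuousOn.add
    · exact fun x hx => ((hFcont x (hsub hx)).continuousWithinAt)
    · apply ContinuousOn.log
      · apply ContinuousOn.div
        · exact (continuous_id.sub continuous_const).continuousOn
        · exact (continuous_id.sub continuous_const).continuousOn
        · intro x hx
          have := (hsub hx).1
          intro h0
          rw [sub_eq_zero] at h0
          rw [h0] at this
          exact lt_irrefl _ this
      · intro x hx
        apply div_ne_zero
        · have := (hsub hx).1
          intro h0; rw [sub_eq_zero] at h0; rw [h0] at this; linarith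
        · have := (hsub hx).1
          intro h0; rw [sub_eq_zero] at h0; rw [h0] at this; linarith
    · apply ContinuousOn.log
      · apply ContinuousOn.div
        · exact (continuous_id.sub continuous_const).continuousOn
        · exact (continuous_id.sub continuous_const).continuousOn
        · intro x hx
          have := (hsub hx).2
          intro h0
          rw [sub_eq_zero] at h0
          rw [h0] at this
          linarith
      · intro x hx
        apply div_ne_zero
        · have := (hsub hx).2
          intro h0; rw [sub_eq_zero] at h0; rw [h0] at this; linarith
        · have := (hsub hx).2
          intro h0; rw [sub_eq_zero] at h0; rw [h0] at this; linarith
  -- intermediate value theorem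
  have hIVT := intermediate_value_Icc' hq₁₂ hGcont
  have h0mem : (0 : ℝ) ∈ Set.Icc (G q₂) (G q₁) := ⟨hG2.le, hG1.le⟩
  obtain ⟨q, hqmem, hq0⟩ := hIVT h0mem
  refine ⟨q, hsub hqmem, ?_⟩
  rw [P, himg]
  have hcast : (∫ t in Y ∪ (Set.Ioo a c ∪ Set.Ioo d b), ((q : ℂ) - (t : ℂ))⁻¹)
      = ((∫ t in Y ∪ (Set.Ioo a c ∪ Set.Ioo d b), (q - t)⁻¹ : ℝ) : ℂ) := by
    simp only [← Complex.ofReal_sub, ← Complex.ofReal_inv]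
    exact integral_ofReal
  rw [hcast, hGF q (hsub hqmem), hq0, Complex.ofReal_zero, mul_zero]
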